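/- arXiv:1702.05932 — 7 statements merged into one kernel-verified Lean document; each statement's English description precedes it below -/
import Mathlib

section
/- Let A be a permutation-like array of n distinct elements and let kmax = max over elements a of |pos(a) - rank(a)| be the maximum displacement. If A[i] > A[j], then i ≥ j - (2·kmax - 1). -/
/-- `rank A i` is the number of elements of the array `A` that are smaller than `A i`,
i.e. the (0-indexed) position `A i` would have in the sorted version of `A`. -/
def rank {n : ℕ} (A : Fin n → ℤ) (i : Fin n) : ℕ :=
  (Finset.univ.filter (fun j => A j < A i)).card

/-- If every element of a distinct array is displaced by at most `kmax` positions from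
its rank, then `A i > A j` implies `i ≥ j - (2 kmax - 1)`. -/
theorem displacement_inversion_bound {n : ℕ} (A : Fin n → ℤ)
    (hinj : Function.Injective A) (kmax : ℕ)
    (hdisp : ∀ i : Fin n, ((i : ℤ) - rank A i).natAbs ≤ kmax)
    (i j : Fin n) (hij : A j < A i) :
    (i : ℤ) ≥ (j : ℤ) - (2 * (kmax : ℤ) - 1) := by
  have hrank : rank A j + 1 ≤ rank A i := by
    have hsub : insert j (Finset.univ.filter (fun k => A k < A j)) ⊆
        Finset.univ.filter (fun k => A k < A i) := by
      intro k hk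
      simp only [Finset.mem_insert, Finset.mem_filter, Finset.mem_univ, true_and] at hk ⊢
      rcases hk with rfl | hk
      · exact hij
      · exact hk.trans hij
    have hcard := Finset.card_le_card hsub
    rwa [Finset.card_insert_of_notMem (by simp)] at hcard
  have hi := hdisp i
  have hj := hdisp j
  omega
end

section
/- For any array A, the minimum number of element moves needed to sort A equals n minus the length of a longest nondecreasing subsequence of A, i.e., kmov = kseq. -/
/-- `reachN step k a b`: `b` is reachable from `a` in exactly `k` steps of `step`. -/
def reachN {α : Type*} (step : α → α → Prop) : ℕ → α → α → Prop
  | 0, a, b => a = b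
  | k + 1, a, b => ∃ c, step a c ∧ reachN step k c b

/-- The minimum number of `step`-operations needed to turn `l` into a sorted list. -/
noncomputable def sortCost (step : List ℤ → List ℤ → Prop) (l : List ℤ) : ℕ :=
  sInf {k | ∃ l', reachN step k l l' ∧ l'.Pairwise (· ≤ ·)}

/-- One element move: remove the element at position `i` and reinsert it at position `j`. -/
def moveStep (l l' : List ℤ) : Prop :=
  ∃ (i j : ℕ) (x : ℤ), l[i]? = some x ∧ l' = (l.eraseIdx i).insertIdx j x

/-- One replacement: the two lists have the same length and differ in at most one position. -/
def repStep (l l' : List ℤ) : Prop :=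
  l.length = l'.length ∧ ∃ i : ℕ, ∀ j : ℕ, j ≠ i → l[j]? = l'[j]?

/-- One adjacent transposition. -/
def adjSwapStep (l l' : List ℤ) : Prop :=
  ∃ (l₁ l₂ : List ℤ) (a b : ℤ), l = l₁ ++ a :: b :: l₂ ∧ l' = l₁ ++ b :: a :: l₂

/-- One (arbitrary) transposition: the contents of positions `i` and `j` are exchanged. -/
def swapStep (l l' : List ℤ) : Prop :=
  ∃ i j : ℕ, l.length = l'.length ∧ l'[i]? = l[j]? ∧ l'[j]? = l[i]? ∧
    ∀ k : ℕ, k ≠ i → k ≠ j → l'[k]? = l[k]?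

/-- One block swap: two disjoint contiguous blocks are exchanged. -/
def blockSwapStep (l l' : List ℤ) : Prop :=
  ∃ p x q y r : List ℤ, l = p ++ x ++ q ++ y ++ r ∧ l' = p ++ y ++ q ++ x ++ r

/-- One restricted block swap: two disjoint contiguous blocks of equal length are exchanged. -/
def rblockSwapStep (l l' : List ℤ) : Prop :=
  ∃ p x q y r : List ℤ, x.length = y.length ∧
    l = p ++ x ++ q ++ y ++ r ∧ l' = p ++ y ++ q ++ x ++ r

/-- One block move: a contiguous block is removed and reinserted elsewhere. -/
def blockMoveStep (l l' : List ℤ) : Prop :=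
  ∃ p x q r : List ℤ, l = p ++ x ++ q ++ r ∧ l' = p ++ q ++ x ++ r

/-- The length of a longest nondecreasing subsequence of `l`. -/
noncomputable def lisLen (l : List ℤ) : ℕ :=
  sSup {m | ∃ t : List ℤ, t.Sublist l ∧ t.Pairwise (· ≤ ·) ∧ t.length = m}

/-- `kseq l` is `n` minus the length of a longest nondecreasing subsequence. -/
noncomputable def kseq (l : List ℤ) : ℕ := l.length - lisLen l

/-- The number of inversions of `l`. -/
def kinv (l : List ℤ) : ℕ :=
  (((Finset.range l.length) ×ˢ (Finset.range l.length)).filter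
    (fun p => p.1 < p.2 ∧ l.getD p.2 0 < l.getD p.1 0)).card

/-- The number of adjacent inversions of `l`. -/
def kainv (l : List ℤ) : ℕ :=
  ((Finset.range (l.length - 1)).filter (fun i => l.getD (i + 1) 0 < l.getD i 0)).card

section helpers

lemma lisSet_nonempty (l : List ℤ) :
    {m | ∃ t : List ℤ, t.Sublist l ∧ t.Pairwise (· ≤ ·) ∧ t.length = m}.Nonempty :=
  ⟨0, [], List.nil_sublist l, List.Pairwise.nil, rfl⟩

lemma lisSet_bdd (l : List ℤ) :
    BddAbove {m | ∃ t : List ℤ, t.Sublist l ∧ t.Pairwise (· ≤ ·) ∧ t.length = m} :=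
  ⟨l.length, fun m ⟨t, h1, _, h3⟩ => h3 ▸ h1.length_le⟩

lemma lisLen_le_length (l : List ℤ) : lisLen l ≤ l.length :=
  csSup_le (lisSet_nonempty l) (fun m ⟨t, h1, _, h3⟩ => h3 ▸ h1.length_le)

lemma le_lisLen {t l : List ℤ} (h1 : t.Sublist l) (h2 : t.Pairwise (· ≤ ·)) :
    t.length ≤ lisLen l :=
  le_csSup (lisSet_bdd l) ⟨t, h1, h2, rfl⟩

lemma exists_lis (l : List ℤ) :
    ∃ t : List ℤ, t.Sublist l ∧ t.Pairwise (· ≤ ·) ∧ t.length = lisLen l :=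
  Nat.sSup_mem (lisSet_nonempty l) (lisSet_bdd l)

lemma lisLen_mono {l l' : List ℤ} (h : l.Sublist l') : lisLen l ≤ lisLen l' :=
  csSup_le (lisSet_nonempty l)
    (fun m ⟨t, h1, h2, h3⟩ => le_csSup (lisSet_bdd l') ⟨t, h1.trans h, h2, h3⟩)

lemma insertIdx_eq_take_cons_drop {α : Type*} (x : α) :
    ∀ (n : ℕ) (l : List α), n ≤ l.length →
      l.insertIdx n x = l.take n ++ x :: l.drop n := by
  intro n
  induction n with
  | zero => intro l _; simp
  | succ n ih =>
    intro l hl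
    cases l with
    | nil => simp at hl
    | cons a l =>
      simp only [List.insertIdx_succ_cons, List.take, List.drop, List.cons_append]
      rw [ih l (by simpa using hl)]

/-- Lower-bound step: one move decreases `kseq` by at most one. -/
lemma kseq_step {l l' : List ℤ} (h : moveStep l l') : kseq l ≤ kseq l' + 1 := by
  obtain ⟨i, j, x, hx, hl'⟩ := h
  have hi : i < l.length := (by obtain ⟨h, _⟩ := List.getElem?_eq_some_iff.mp hx; exact h)
  have hmlen : (l.eraseIdx i).length = l.length - 1 := by
    rw [List.length_eraseIdx]; simp [hi]
  by_cases hj : j ≤ (l.eraseIdx i).length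
  · have hl'' : l' = (l.eraseIdx i).take j ++ x :: (l.eraseIdx i).drop j := by
      rw [hl', insertIdx_eq_take_cons_drop x j _ hj]
    have hlen' : l'.length = l.length := by
      rw [hl'']
      simp only [List.length_append, List.length_cons, List.length_take, List.length_drop]
      omega
    obtain ⟨t', ht'l, ht's, ht'len⟩ := exists_lis l'
    rw [hl''] at ht'l
    obtain ⟨s1, s23, hteq, hs1, hs23⟩ := List.sublist_append_iff.mp ht'l
    have key : lisLen l' ≤ lisLen l + 1 := by
      rcases List.sublist_cons_iff.mp hs23 with hs | ⟨s3, hs23eq, hs3⟩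
      · -- t' = s1 ++ s23 with s23 <+ drop
        have hsub : t'.Sublist (l.eraseIdx i) := by
          rw [hteq, ← List.take_append_drop j (l.eraseIdx i)]
          exact hs1.append hs
        have := le_lisLen (hsub.trans (List.eraseIdx_sublist l i)) ht's
        omega
      · have hsub : (s1 ++ s3).Sublist (l.eraseIdx i) := by
          calc (s1 ++ s3).Sublist ((l.eraseIdx i).take j ++ (l.eraseIdx i).drop j) :=
              hs1.append hs3
            _ = l.eraseIdx i := by rw [List.take_append_drop]
        have hsort : (s1 ++ s3).Pairwise (· ≤ ·) := by
          have : (s1 ++ s3).Sublist t' := by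
            rw [hteq, hs23eq]
            exact (List.Sublist.refl s1).append (List.sublist_cons_self x s3)
          exact ht's.sublist this
        have hle := le_lisLen (hsub.trans (List.eraseIdx_sublist l i)) hsort
        have : t'.length = s1.length + s3.length + 1 := by
          rw [hteq, hs23eq]; simp; omega
        simp only [List.length_append] at hle
        omega
    unfold kseq
    have h1 := lisLen_le_length l'
    omega
  · push_neg at hj
    have hl'' : l' = l.eraseIdx i := by
      rw [hl', List.insertIdx_of_length_lt hj]
    have hmono : lisLen l' ≤ lisLen l := hl'' ▸ lisLen_mono (List.eraseIdx_sublist l i)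
    have h1 := lisLen_le_length l'
    have hlen' : l'.length = l.length - 1 := by rw [hl'']; exact hmlen
    unfold kseq
    omega

lemma lower_bound : ∀ (k : ℕ) (l l' : List ℤ),
    reachN moveStep k l l' → l'.Pairwise (· ≤ ·) → kseq l ≤ k := by
  intro k
  induction k with
  | zero =>
    intro l l' hr hs
    have heq : l = l' := hr
    subst heq
    have := le_lisLen (List.Sublist.refl l) hs
    unfold kseq
    omega
  | succ k ih =>
    intro l l' hr hs
    obtain ⟨c, hstep, hr⟩ := hr
    have h1 := kseq_step hstep
    have h2 := ih c l' hr hs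
    omega

/-- If `t` is a strict (in length) sublist of `l`, some index can be erased keeping `t`. -/
lemma exists_erase : ∀ {t l : List ℤ}, t.Sublist l → t.length < l.length →
    ∃ i x, l[i]? = some x ∧ t.Sublist (l.eraseIdx i) := by
  intro t l h
  induction h with
  | slnil => intro h; simp at h
  | @cons t l a h ih =>
    intro _
    exact ⟨0, a, by simp, by simpa using h⟩
  | @cons_cons t l a h ih =>
    intro hlen
    obtain ⟨i, x, h1, h2⟩ := ih (by simpa using hlen)
    exact ⟨i + 1, x, by simpa using h1, by simpa using h2.cons₂ a⟩

/-- Upper-bound step: given a sorted sublist shorter than `l`, one move produces a list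
of the same length with a longer sorted sublist. -/
lemma step_up (l t : List ℤ) (hs : t.Sublist l) (hsort : t.Pairwise (· ≤ ·))
    (hlen : t.length < l.length) :
    ∃ (l' t' : List ℤ), moveStep l l' ∧ l'.length = l.length ∧ t'.Sublist l' ∧
      t'.Pairwise (· ≤ ·) ∧ t'.length = t.length + 1 := by
  obtain ⟨i, x, hx, ht⟩ := exists_erase hs hlen
  have hi : i < l.length := (by obtain ⟨h, _⟩ := List.getElem?_eq_some_iff.mp hx; exact h)
  set m := l.eraseIdx i with hm
  have hmlen : m.length = l.length - 1 := by
    rw [hm, List.length_eraseIdx]; simp [hi]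
  set p : ℤ → Bool := fun b => decide ¬ x ≤ b with hp
  have htsplit : t.takeWhile p ++ t.dropWhile p = t := List.takeWhile_append_dropWhile (p := p) (l := t)
  have ht' : (t.takeWhile p ++ t.dropWhile p).Sublist m := by rw [htsplit]; exact ht
  obtain ⟨m1, m2, hmeq, hsm1, hsm2⟩ := List.append_sublist_iff.mp ht'
  refine ⟨m1 ++ x :: m2, List.orderedInsert (· ≤ ·) x t, ⟨i, m1.length, x, hx, ?_⟩, ?_, ?_, ?_, ?_⟩
  · -- l' = m.insertIdx m1.length x
    rw [← hm, hmeq, insertIdx_eq_take_cons_drop x m1.length (m1 ++ m2)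
      (by simp), List.take_left, List.drop_left]
  · have : (m1 ++ x :: m2).length = m.length + 1 := by
      rw [hmeq]; simp; omega
    omega
  · rw [List.orderedInsert_eq_take_drop]
    exact hsm1.append (hsm2.cons₂ x)
  · exact hsort.orderedInsert x t
  · rw [List.orderedInsert_length]

lemma upper_bound : ∀ (k : ℕ) (l t : List ℤ), t.Sublist l → t.Pairwise (· ≤ ·) →
    l.length = t.length + k → ∃ l', reachN moveStep k l l' ∧ l'.Pairwise (· ≤ ·) := by
  intro k
  induction k with
  | zero =>
    intro l t h1 h2 h3
    have : t = l := h1.eq_of_length (by omega)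
    exact ⟨l, rfl, this ▸ h2⟩
  | succ k ih =>
    intro l t h1 h2 h3
    obtain ⟨l', t', hstep, hlen, hsub, hsort, htlen⟩ := step_up l t h1 h2 (by omega)
    obtain ⟨l'', hr, hs⟩ := ih l' t' hsub hsort (by omega)
    exact ⟨l'', ⟨l', hstep, hr⟩, hs⟩

end helpers

/-- The minimum number of element moves needed to sort an array equals
`n` minus the length of a longest nondecreasing subsequence. -/
theorem kmov_eq_kseq (l : List ℤ) : sortCost moveStep l = kseq l := by
  obtain ⟨t, h1, h2, h3⟩ := exists_lis l
  have hle : lisLen l ≤ l.length := lisLen_le_length l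
  obtain ⟨l', hr, hs⟩ := upper_bound (kseq l) l t h1 h2 (by unfold kseq; omega)
  apply le_antisymm
  · exact Nat.sInf_le ⟨l', hr, hs⟩
  · exact le_csInf ⟨kseq l, l', hr, hs⟩ (fun k ⟨l'', hr', hs'⟩ => lower_bound k l l'' hr' hs')
end

section
/- For any array A, the minimum number of element replacements needed to sort A is at most the number of inversions of A, i.e., krep ≤ kinv. -/
lemma sorted_of_kinv_eq_zero (l : List ℤ) (h : kinv l = 0) : l.Pairwise (· ≤ ·) := by
  classical
  rw [List.pairwise_iff_getElem]
  intro i j hi hj hij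
  by_contra hc
  push_neg at hc
  have hmem : ((i, j) : ℕ × ℕ) ∈ (((Finset.range l.length) ×ˢ (Finset.range l.length)).filter
      (fun p => p.1 < p.2 ∧ l.getD p.2 0 < l.getD p.1 0)) := by
    simp only [Finset.mem_filter, Finset.mem_product, Finset.mem_range]
    refine ⟨⟨hi, hj⟩, hij, ?_⟩
    rwa [List.getD_eq_getElem l 0 hi, List.getD_eq_getElem l 0 hj]
  have := Finset.card_pos.mpr ⟨_, hmem⟩
  unfold kinv at h
  omega

lemma exists_rep_step (l : List ℤ) (h : 0 < kinv l) :
    ∃ l', repStep l l' ∧ kinv l' < kinv l := by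
  classical
  set n := l.length with hn
  have hne : (((Finset.range n) ×ˢ (Finset.range n)).filter
      (fun p => p.1 < p.2 ∧ l.getD p.2 0 < l.getD p.1 0)).Nonempty :=
    Finset.card_pos.mp h
  obtain ⟨⟨p₀, q₀⟩, hp⟩ := hne
  simp only [Finset.mem_filter, Finset.mem_product, Finset.mem_range] at hp
  -- Q p : p is the left index of an inversion
  have hQ : ∃ p, ∃ j, p < j ∧ j < n ∧ l.getD j 0 < l.getD p 0 :=
    ⟨p₀, q₀, hp.2.1, hp.1.2, hp.2.2⟩
  let i := Nat.find hQ
  obtain ⟨b0, hib0, hb0n, hlt⟩ := Nat.find_spec hQ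
  have hmin : ∀ p < i, ∀ j, p < j → j < n → l.getD p 0 ≤ l.getD j 0 := by
    intro p hp j hpj hjn
    have := Nat.find_min hQ hp
    push_neg at this
    exact this j hpj hjn
  have hin : i < n := lt_trans hib0 hb0n
  -- v : minimum value to the right of i
  have hVne : ((Finset.Ioo i n).image (fun b => l.getD b 0)).Nonempty :=
    ⟨l.getD b0 0, Finset.mem_image.mpr ⟨b0, Finset.mem_Ioo.mpr ⟨hib0, hb0n⟩, rfl⟩⟩
  set v := ((Finset.Ioo i n).image (fun b => l.getD b 0)).min' hVne with hv
  have hv_le : ∀ b, i < b → b < n → v ≤ l.getD b 0 := fun b h1 h2 =>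
    Finset.min'_le _ _ (Finset.mem_image.mpr ⟨b, Finset.mem_Ioo.mpr ⟨h1, h2⟩, rfl⟩)
  have hle_v : ∀ p, p < i → l.getD p 0 ≤ v := by
    intro p hp
    obtain ⟨b, hb, hbv⟩ := Finset.mem_image.mp (Finset.min'_mem _ hVne)
    rw [Finset.mem_Ioo] at hb
    rw [hv, ← hbv]
    exact hmin p hp b (lt_trans hp hb.1) hb.2
  refine ⟨l.set i v, ⟨(List.length_set ..).symm, i, fun j hj => ?_⟩, ?_⟩
  · simp [List.getElem?_set_ne (Ne.symm hj)]
  -- getD facts about l' := l.set i v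
  have hgne : ∀ j, j ≠ i → (l.set i v).getD j 0 = l.getD j 0 := by
    intro j hj; simp [List.getD, List.getElem?_set_ne (Ne.symm hj)]
  have hgi : (l.set i v).getD i 0 = v := by
    simp [List.getD, List.getElem?_set_self', hn ▸ hin]
  have hlen : (l.set i v).length = n := List.length_set ..
  rw [kinv, kinv, hlen, ← hn]
  apply Finset.card_lt_card
  constructor
  · intro ⟨p, q⟩ hpq
    simp only [Finset.mem_filter, Finset.mem_product, Finset.mem_range] at hpq ⊢
    obtain ⟨⟨hpn, hqn⟩, hpq, hinv⟩ := hpq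
    refine ⟨⟨hpn, hqn⟩, hpq, ?_⟩
    rcases eq_or_ne p i with rfl | hpi
    · exfalso
      rw [hgi, hgne q (by omega)] at hinv
      exact absurd (hv_le q hpq hqn) (not_le.mpr hinv)
    rcases eq_or_ne q i with rfl | hqi
    · exfalso
      rw [hgi, hgne p (by omega)] at hinv
      exact absurd (hle_v p hpq) (not_le.mpr hinv)
    · rwa [hgne p hpi, hgne q hqi] at hinv
  · intro hsub
    have hmem : ((i, b0) : ℕ × ℕ) ∈ ((Finset.range n) ×ˢ (Finset.range n)).filter
        (fun p => p.1 < p.2 ∧ (l.set i v).getD p.2 0 < (l.set i v).getD p.1 0) := by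
      apply hsub
      simp only [Finset.mem_filter, Finset.mem_product, Finset.mem_range]
      exact ⟨⟨hin, hb0n⟩, hib0, hlt⟩
    simp only [Finset.mem_filter, Finset.mem_product, Finset.mem_range] at hmem
    have := hmem.2.2
    rw [hgi, hgne b0 (by omega)] at this
    exact absurd (hv_le b0 hib0 hb0n) (not_le.mpr this)

lemma key : ∀ N, ∀ l : List ℤ, kinv l ≤ N →
    ∃ k ≤ kinv l, ∃ m : List ℤ, reachN repStep k l m ∧ m.Pairwise (· ≤ ·) := by
  intro N
  induction N with
  | zero =>
    intro l hl
    exact ⟨0, Nat.zero_le _, l, rfl, sorted_of_kinv_eq_zero l (Nat.le_zero.mp hl)⟩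
  | succ N ih =>
    intro l hl
    rcases Nat.eq_zero_or_pos (kinv l) with h0 | h0
    · exact ⟨0, Nat.zero_le _, l, rfl, sorted_of_kinv_eq_zero l h0⟩
    · obtain ⟨l', hstep, hlt⟩ := exists_rep_step l h0
      obtain ⟨k, hk, m, hr, hs⟩ := ih l' (by omega)
      exact ⟨k + 1, by omega, m, ⟨l', hstep, hr⟩, hs⟩

/-- The minimum number of replacements needed to sort an array is at most its
number of inversions. -/
theorem krep_le_kinv (l : List ℤ) : sortCost repStep l ≤ kinv l := by
  obtain ⟨k, hk, m, hr, hs⟩ := key (kinv l) l le_rfl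
  exact le_trans (Nat.sInf_le ⟨m, hr, hs⟩) hk
end

section
/- For any array A, the minimum number of block swaps needed to sort A satisfies kbswap ≤ kbmov ≤ 2·kbswap, where kbmov is the minimum number of block moves needed to sort A. -/
lemma reachN_trans {α : Type*} {step : α → α → Prop} :
    ∀ {m : ℕ} {n : ℕ} {a b c : α}, reachN step m a b → reachN step n b c →
      reachN step (m + n) a c
  | 0, n, a, b, c, h, h' => by cases h; simpa [Nat.zero_add] using h'
  | m + 1, n, a, b, c, h, h' => by
    obtain ⟨d, hd, hr⟩ := h
    rw [Nat.succ_add]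
    exact ⟨d, hd, reachN_trans hr h'⟩

lemma reachN_mono {α : Type*} {s t : α → α → Prop} (h : ∀ x y, s x y → t x y) :
    ∀ {k : ℕ} {a b : α}, reachN s k a b → reachN t k a b
  | 0, a, b, hr => hr
  | k + 1, a, b, ⟨c, hc, hr⟩ => ⟨c, h _ _ hc, reachN_mono h hr⟩

lemma reachN_map {α : Type*} {step : α → α → Prop} (f : α → α)
    (hf : ∀ x y, step x y → step (f x) (f y)) :
    ∀ {k : ℕ} {a b : α}, reachN step k a b → reachN step k (f a) (f b)
  | 0, a, b, hr => by cases hr; rfl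
  | k + 1, a, b, ⟨c, hc, hr⟩ => ⟨f c, hf _ _ hc, reachN_map f hf hr⟩

lemma move_of_swap {l l' : List ℤ} (h : blockMoveStep l l') : blockSwapStep l l' := by
  obtain ⟨p, x, q, r, h1, h2⟩ := h
  exact ⟨p, x, [], q, r, by simp [h1], by simp [h2]⟩

lemma swap_to_moves {l l' : List ℤ} (h : blockSwapStep l l') :
    reachN blockMoveStep 2 l l' := by
  obtain ⟨p, x, q, y, r, h1, h2⟩ := h
  refine ⟨p ++ (q ++ y) ++ x ++ r, ⟨p, x, q ++ y, r, by simp [h1], by simp⟩,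
    p ++ y ++ q ++ (x ++ r), ⟨p, q, y, x ++ r, by simp, by simp⟩, ?_⟩
  show _ = _
  simp [h2]

lemma swapReach_to_moveReach :
    ∀ {k : ℕ} {a b : List ℤ}, reachN blockSwapStep k a b →
      reachN blockMoveStep (2 * k) a b
  | 0, a, b, h => h
  | k + 1, a, b, ⟨c, hc, hr⟩ => by
    have : reachN blockMoveStep (2 + 2 * k) a b :=
      reachN_trans (swap_to_moves hc) (swapReach_to_moveReach hr)
    simpa [Nat.mul_add, Nat.add_comm] using this

lemma cons_move {a : ℤ} {t t' : List ℤ} (h : blockMoveStep t t') :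
    blockMoveStep (a :: t) (a :: t') := by
  obtain ⟨p, x, q, r, h1, h2⟩ := h
  exact ⟨a :: p, x, q, r, by simp [h1], by simp [h2]⟩

lemma move_sortable : ∀ l : List ℤ,
    ∃ (k : ℕ) (l' : List ℤ), reachN blockMoveStep k l l' ∧ l'.Pairwise (· ≤ ·)
  | [] => ⟨0, [], rfl, List.Pairwise.nil⟩
  | a :: t => by
    obtain ⟨k, t', hr, hs⟩ := move_sortable t
    refine ⟨k + 1, List.orderedInsert (· ≤ ·) a t', ?_, hs.orderedInsert a t'⟩
    have h1 : reachN blockMoveStep k (a :: t) (a :: t') :=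
      reachN_map _ (fun _ _ => cons_move) hr
    have h2 : blockMoveStep (a :: t') (List.orderedInsert (· ≤ ·) a t') := by
      refine ⟨[], [a], t'.takeWhile (fun b => ¬ a ≤ b), t'.dropWhile (fun b => ¬ a ≤ b),
        by simp [List.takeWhile_append_dropWhile], ?_⟩
      rw [List.orderedInsert_eq_take_drop]; simp
    have hstep : reachN blockMoveStep 1 (a :: t')
        (List.orderedInsert (· ≤ ·) a t') := ⟨_, h2, rfl⟩
    exact reachN_trans h1 hstep

/-- `kbswap ≤ kbmov ≤ 2 · kbswap` for the minimum numbers of block swaps and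
block moves needed to sort an array. -/
theorem kbswap_le_kbmov_le_two_kbswap (l : List ℤ) :
    sortCost blockSwapStep l ≤ sortCost blockMoveStep l ∧
    sortCost blockMoveStep l ≤ 2 * sortCost blockSwapStep l := by
  set M := {k | ∃ l', reachN blockMoveStep k l l' ∧ l'.Pairwise (· ≤ ·)} with hM
  set S := {k | ∃ l', reachN blockSwapStep k l l' ∧ l'.Pairwise (· ≤ ·)} with hS
  have hMS : M ⊆ S := fun k ⟨l', hr, hs⟩ =>
    ⟨l', reachN_mono (fun _ _ => move_of_swap) hr, hs⟩
  have hMne : M.Nonempty := by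
    obtain ⟨k, l', hr, hs⟩ := move_sortable l
    exact ⟨k, l', hr, hs⟩
  have hSne : S.Nonempty := hMne.mono hMS
  constructor
  · exact Nat.sInf_le (hMS (Nat.sInf_mem hMne))
  · obtain ⟨l', hr, hs⟩ := Nat.sInf_mem hSne
    exact Nat.sInf_le ⟨l', swapReach_to_moveReach hr, hs⟩
end

section
/- For any array A, the number of adjacent inversions kainv is at most kseq, where kseq is n minus the length of a longest nondecreasing subsequence of A. -/

def dcount : List ℤ → ℕ
  | [] => 0
  | [_] => 0
  | a :: b :: t => (if b < a then 1 else 0) + dcount (b :: t)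

lemma key_s11 (l : List ℤ) :
    (∀ t : List ℤ, t.Sublist l → t.Pairwise (· ≤ ·) → dcount l + t.length ≤ l.length) ∧
    (∀ (c : ℤ) (t : List ℤ), t.Sublist l → t.Pairwise (· ≤ ·) → (∀ y ∈ t, c ≤ y) →
      dcount (c :: l) + t.length ≤ l.length) := by
  induction l with
  | nil =>
    constructor
    · intro t hsub _; simp_all [List.sublist_nil, dcount]
    · intro c t hsub _ _; rw [List.sublist_nil] at hsub; simp [hsub, dcount]
  | cons a l ih =>
    obtain ⟨ih1, ih2⟩ := ih
    have hda : dcount (a :: l) ≤ 1 + dcount l := by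
      cases l with
      | nil => simp [dcount]
      | cons b m => simp only [dcount]; split <;> omega
    constructor
    · intro t hsub hsort
      cases hsub with
      | cons _ h =>
        have := ih1 t h hsort
        simp only [List.length_cons]; omega
      | cons_cons _ h =>
        rename_i s
        rw [List.pairwise_cons] at hsort
        have := ih2 a s h hsort.2 hsort.1
        simp only [List.length_cons]; omega
    · intro c t hsub hsort hc
      have hdc : dcount (c :: a :: l) = (if a < c then 1 else 0) + dcount (a :: l) := rfl
      cases hsub with
      | cons _ h =>
        by_cases hac : a < c
        · have := ih2 a t h hsort (fun y hy => le_of_lt (lt_of_lt_of_le hac (hc y hy)))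
          simp only [List.length_cons]; rw [hdc]; simp [hac]; omega
        · have := ih1 t h hsort
          simp only [List.length_cons]; rw [hdc]; simp [hac]; omega
      | cons_cons _ h =>
        rename_i s
        have hca : c ≤ a := hc a (by simp)
        have hac : ¬ a < c := not_lt.mpr hca
        rw [List.pairwise_cons] at hsort
        have := ih2 a s h hsort.2 hsort.1
        simp only [List.length_cons]; rw [hdc]; simp [hac]; omega

lemma card_filter_range_succ (P : ℕ → Prop) [DecidablePred P] (n : ℕ) :
    ((Finset.range (n + 1)).filter P).card =
      (if P 0 then 1 else 0) + ((Finset.range n).filter (fun i => P (i + 1))).card := by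
  induction n with
  | zero => simp [Finset.range_one, Finset.filter_singleton]; split <;> simp
  | succ n ih =>
    have h1 : Finset.range (n + 1 + 1) = insert (n + 1) (Finset.range (n + 1)) :=
      Finset.range_add_one
    have h2 : Finset.range (n + 1) = insert n (Finset.range n) := Finset.range_add_one
    by_cases h : P (n + 1)
    · rw [h1, Finset.filter_insert, if_pos h, Finset.card_insert_of_notMem (by simp), ih,
        h2, Finset.filter_insert, if_pos h, Finset.card_insert_of_notMem (by simp)]
      omega
    · rw [h1, Finset.filter_insert, if_neg h, ih, h2, Finset.filter_insert, if_neg h]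


lemma kainv_eq_dcount (l : List ℤ) : kainv l = dcount l := by
  induction l with
  | nil => simp [kainv, dcount]
  | cons a l ih =>
    cases l with
    | nil => simp [kainv, dcount]
    | cons b t =>
      have h : kainv (a :: b :: t) =
          (if (a :: b :: t).getD 1 0 < (a :: b :: t).getD 0 0 then 1 else 0) +
          ((Finset.range ((b :: t).length - 1)).filter
            (fun i => (a :: b :: t).getD (i + 2) 0 < (a :: b :: t).getD (i + 1) 0)).card := by
        unfold kainv
        simp only [List.length_cons, Nat.add_sub_cancel]
        exact card_filter_range_succ _ _
      rw [h]
      simp only [List.getD_cons_succ, List.getD_cons_zero]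
      unfold kainv at ih
      simp only [List.getD_cons_succ] at *
      rw [ih]
      rfl

theorem kainv_le_kseq' (l : List ℤ) : kainv l ≤ kseq l := by
  have hmem : lisLen l ∈ {m | ∃ t : List ℤ, t.Sublist l ∧ t.Pairwise (· ≤ ·) ∧ t.length = m} := by
    apply Nat.sSup_mem
    · exact ⟨0, [], List.nil_sublist l, List.Pairwise.nil, rfl⟩
    · exact ⟨l.length, fun m hm => by obtain ⟨t, ht, _, hlen⟩ := hm; exact hlen ▸ ht.length_le⟩
  obtain ⟨t, hsub, hsort, hlen⟩ := hmem
  have h := (key_s11 l).1 t hsub hsort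
  rw [← kainv_eq_dcount] at h
  unfold kseq
  omega

/-- The number of adjacent inversions is at most `n` minus the length of a longest
nondecreasing subsequence. -/
theorem kainv_le_kseq (l : List ℤ) : kainv l ≤ kseq l := kainv_le_kseq' l
end

section
/- A single block swap applied to any array increases the number of adjacent inversions by at most 2; consequently, for any array A, kainv ≤ 2·kbswap. -/
/-- descent count, recursive -/
def dc : List ℤ → ℕ
  | [] => 0
  | [_] => 0
  | a :: b :: t => (if b < a then 1 else 0) + dc (b :: t)

def brO : Option ℤ → Option ℤ → ℕ
  | some u, some v => if v < u then 1 else 0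
  | _, _ => 0

def br (a b : List ℤ) : ℕ := brO a.getLast? b.head?

lemma kainv_cons_cons (a b : ℤ) (t : List ℤ) :
    kainv (a :: b :: t) = (if b < a then 1 else 0) + kainv (b :: t) := by
  simp only [kainv, List.length_cons, Nat.add_sub_cancel, Finset.card_filter,
    Finset.sum_range_succ', List.getD_cons_succ, List.getD_cons_zero]
  omega

lemma kainv_eq_dc : ∀ l : List ℤ, kainv l = dc l
  | [] => by simp [kainv, dc]
  | [a] => by simp [kainv, dc]
  | a :: b :: t => by rw [kainv_cons_cons, kainv_eq_dc (b :: t)]; rfl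

lemma dc_append : ∀ a b : List ℤ, dc (a ++ b) = dc a + dc b + br a b
  | [], b => by simp [dc, br, brO]
  | [u], b => by
      cases b with
      | nil => simp [dc, br, brO]
      | cons v bs => simp [dc, br, brO]; omega
  | u :: w :: t, b => by
      have h := dc_append (w :: t) b
      simp only [List.cons_append, dc] at h ⊢
      rw [h]
      have hb : br (u :: w :: t) b = br (w :: t) b := by
        simp [br, List.getLast?_cons_cons]
      rw [hb]; omega

lemma keyO (op ox ox' oq oq' oy oy' orr : Option ℤ)
    (hx : ox = none ↔ ox' = none) (hq : oq = none ↔ oq' = none)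
    (hy : oy = none ↔ oy' = none) :
    brO op (oy.or (oq.or (ox.or orr))) + brO oy' (oq.or (ox.or orr)) +
      brO oq' (ox.or orr) + brO ox' orr
    ≤ brO op (ox.or (oq.or (oy.or orr))) + brO ox' (oq.or (oy.or orr)) +
      brO oq' (oy.or orr) + brO oy' orr + 2 := by
  rcases op with _ | pe <;> rcases ox with _ | xs <;> rcases ox' with _ | xe <;>
    rcases oq with _ | qs <;> rcases oq' with _ | qe <;> rcases oy with _ | ys <;>
    rcases oy' with _ | ye <;> rcases orr with _ | rs <;>
    simp_all [brO] <;> split_ifs <;> omega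

lemma br_isnone (l : List ℤ) : l.head? = none ↔ l.getLast? = none := by
  simp [List.head?_eq_none_iff, List.getLast?_eq_none_iff]

lemma key_s12 (p x q y r : List ℤ) :
    br p (y ++ (q ++ (x ++ r))) + br y (q ++ (x ++ r)) + br q (x ++ r) + br x r
    ≤ br p (x ++ (q ++ (y ++ r))) + br x (q ++ (y ++ r)) + br q (y ++ r) + br y r + 2 := by
  simp only [br, List.head?_append]
  exact keyO p.getLast? x.head? x.getLast? q.head? q.getLast? y.head? y.getLast? r.head?
    (br_isnone x) (br_isnone q) (br_isnone y)

lemma step_le (l l' : List ℤ) (h : blockSwapStep l l') : kainv l' ≤ kainv l + 2 := by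
  obtain ⟨p, x, q, y, r, hl, hl'⟩ := h
  subst hl hl'
  simp only [kainv_eq_dc, List.append_assoc]
  rw [dc_append, dc_append, dc_append, dc_append, dc_append, dc_append, dc_append, dc_append]
  have := key_s12 p x q y r
  omega

lemma step_symm {l l' : List ℤ} (h : blockSwapStep l l') : blockSwapStep l' l := by
  obtain ⟨p, x, q, y, r, hl, hl'⟩ := h
  exact ⟨p, y, q, x, r, hl', hl⟩

lemma step_perm {l l' : List ℤ} (h : blockSwapStep l l') : l'.Perm l := by
  obtain ⟨p, x, q, y, r, hl, hl'⟩ := h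
  subst hl hl'
  rw [← Multiset.coe_eq_coe]
  simp only [← Multiset.coe_add]
  abel

lemma reach_perm : ∀ (k : ℕ) (l m : List ℤ), reachN blockSwapStep k l m → m.Perm l
  | 0, l, m, h => by rw [show l = m from h]
  | k + 1, l, m, h => by
      obtain ⟨c, hc, hr⟩ := h
      exact (reach_perm k c m hr).trans (step_perm hc)

lemma step_prefix (c : List ℤ) {l l' : List ℤ} (h : blockSwapStep l l') :
    blockSwapStep (c ++ l) (c ++ l') := by
  obtain ⟨p, x, q, y, r, hl, hl'⟩ := h
  exact ⟨c ++ p, x, q, y, r, by simp [hl], by simp [hl']⟩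

lemma reach_prefix (c : List ℤ) :
    ∀ (k : ℕ) (l m : List ℤ), reachN blockSwapStep k l m →
      reachN blockSwapStep k (c ++ l) (c ++ m)
  | 0, l, m, h => by rw [show l = m from h]; rfl
  | k + 1, l, m, h => by
      obtain ⟨d, hd, hr⟩ := h
      exact ⟨c ++ d, step_prefix c hd, reach_prefix c k d m hr⟩

lemma exists_min : ∀ (l : List ℤ), l ≠ [] → ∃ a ∈ l, ∀ b ∈ l, a ≤ b := by
  intro l
  induction l with
  | nil => intro h; exact absurd rfl h
  | cons a t ih =>
      intro _
      rcases eq_or_ne t [] with ht | ht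
      · subst ht; exact ⟨a, by simp⟩
      · obtain ⟨m, hm, hmin⟩ := ih ht
        rcases le_total a m with h | h
        · refine ⟨a, List.mem_cons_self, fun b hb => ?_⟩
          rcases List.mem_cons.mp hb with rfl | hb
          · exact le_rfl
          · exact le_trans h (hmin b hb)
        · refine ⟨m, List.mem_cons_of_mem a hm, fun b hb => ?_⟩
          rcases List.mem_cons.mp hb with rfl | hb
          · exact h
          · exact hmin b hb

lemma sortable : ∀ (n : ℕ) (l : List ℤ), l.length ≤ n →
    ∃ k m, reachN blockSwapStep k l m ∧ m.Pairwise (· ≤ ·) := by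
  intro n
  induction n with
  | zero =>
      intro l hl
      have : l = [] := List.length_eq_zero_iff.mp (Nat.le_zero.mp hl)
      exact ⟨0, [], by rw [this]; rfl, List.Pairwise.nil⟩
  | succ n ih =>
      intro l hl
      rcases eq_or_ne l [] with rfl | hne
      · exact ⟨0, [], rfl, List.Pairwise.nil⟩
      · obtain ⟨a, ha, hmin⟩ := exists_min l hne
        obtain ⟨s, t, rfl⟩ := List.append_of_mem ha
        have hstep : blockSwapStep (s ++ a :: t) (a :: (s ++ t)) :=
          ⟨[], s, [], [a], t, by simp, by simp⟩
        have hlen : (s ++ t).length ≤ n := by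
          simp only [List.length_append, List.length_cons] at hl ⊢; omega
        obtain ⟨k, m, hr, hs⟩ := ih (s ++ t) hlen
        refine ⟨k + 1, a :: m, ⟨a :: (s ++ t), hstep, ?_⟩, ?_⟩
        · exact reach_prefix [a] k (s ++ t) m hr
        · rw [List.pairwise_cons]
          refine ⟨?_, hs⟩
          intro b hb
          have hb' : b ∈ s ++ t := (reach_perm k (s ++ t) m hr).mem_iff.mp hb
          apply hmin
          rcases List.mem_append.mp hb' with h | h
          · exact List.mem_append.mpr (Or.inl h)
          · exact List.mem_append.mpr (Or.inr (List.mem_cons_of_mem a h))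

lemma dc_sorted : ∀ l : List ℤ, l.Pairwise (· ≤ ·) → dc l = 0
  | [], _ => rfl
  | [_], _ => rfl
  | a :: b :: t, h => by
      have h1 := (List.pairwise_cons.mp h).1 b (by simp)
      have h2 := (List.pairwise_cons.mp h).2
      simp only [dc, if_neg (not_lt.mpr h1), dc_sorted (b :: t) h2]

lemma reach_bound : ∀ (k : ℕ) (l m : List ℤ), reachN blockSwapStep k l m →
    m.Pairwise (· ≤ ·) → kainv l ≤ 2 * k
  | 0, l, m, h, hs => by
      rw [show l = m from h, kainv_eq_dc, dc_sorted m hs]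
  | k + 1, l, m, h, hs => by
      obtain ⟨c, hc, hr⟩ := h
      have h1 := step_le c l (step_symm hc)
      have h2 := reach_bound k c m hr hs
      omega

/-- A single block swap increases the number of adjacent inversions by at most 2;
consequently `kainv ≤ 2 · kbswap`. -/
theorem kainv_le_two_kbswap :
    (∀ l l' : List ℤ, blockSwapStep l l' → kainv l' ≤ kainv l + 2) ∧
    (∀ l : List ℤ, kainv l ≤ 2 * sortCost blockSwapStep l) := by
  constructor
  · exact step_le
  · intro l
    have hne : {k | ∃ l', reachN blockSwapStep k l l' ∧ l'.Pairwise (· ≤ ·)}.Nonempty := by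
      obtain ⟨k, m, hr, hs⟩ := sortable l.length l le_rfl
      exact ⟨k, m, hr, hs⟩
    obtain ⟨m', hr', hs'⟩ := Nat.sInf_mem hne
    exact reach_bound _ l m' hr' hs'
end

section
/- For n ≥ 2, the array A = [n, 2, 3, ..., n-1, 1] can be sorted by a single transposition (kswap = 1) but has maximum displacement kmax = n - 1. -/
/-- The rank of the element at position `i` of `l`: the number of positions holding
smaller elements. -/
def rankL (l : List ℤ) (i : ℕ) : ℕ :=
  ((Finset.range l.length).filter (fun j => l.getD j 0 < l.getD i 0)).card

/-- The maximum displacement of the list `l` (for lists of distinct elements). -/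
def kmaxL (l : List ℤ) : ℕ :=
  (Finset.range l.length).sup (fun i => ((i : ℤ) - rankL l i).natAbs)

/-- the bad list -/
def Bl (m : ℕ) : List ℤ := ((m:ℤ)+2) :: ((List.range m).map (fun i : ℕ => (i:ℤ)+2) ++ [(1:ℤ)])

/-- the sorted list -/
def Cl (m : ℕ) : List ℤ := (List.range (m+2)).map (fun i : ℕ => (i:ℤ)+1)

lemma Bl_length (m : ℕ) : (Bl m).length = m + 2 := by simp [Bl]

lemma Cl_length (m : ℕ) : (Cl m).length = m + 2 := by simp [Cl]

lemma Bl_get (m j : ℕ) : (Bl m)[j]? =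
    if j = 0 then some ((m:ℤ)+2) else if j ≤ m then some ((j:ℤ)+1)
    else if j = m+1 then some 1 else none := by
  match j with
  | 0 => simp [Bl]
  | k+1 =>
    rw [Bl, List.getElem?_cons_succ, List.getElem?_append,
      List.length_map, List.length_range]
    rcases lt_trichotomy k m with h | rfl | h
    · rw [if_pos h, List.getElem?_map, List.getElem?_range h]
      rw [if_neg (by omega), if_pos (by omega)]
      push_cast; simp; ring
    · rw [if_neg (by omega), Nat.sub_self]
      rw [if_neg (by omega), if_neg (by omega), if_pos rfl]
      rfl
    · rw [if_neg (by omega)]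
      rw [if_neg (by omega), if_neg (by omega), if_neg (by omega)]
      have h2 : k - m = 1 + (k - m - 1) := by omega
      rw [h2]
      rw [List.getElem?_eq_none (by simp)]

lemma Cl_get (m j : ℕ) : (Cl m)[j]? =
    if j ≤ m + 1 then some ((j:ℤ)+1) else none := by
  rw [Cl, List.getElem?_map]
  by_cases h : j ≤ m + 1
  · rw [List.getElem?_range (by omega), if_pos h]; rfl
  · rw [if_neg h, List.getElem?_eq_none (by simp; omega)]; rfl

lemma Cl_sorted (m : ℕ) : (Cl m).Pairwise (· ≤ ·) := by
  apply List.Pairwise.map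
  · intro a b (h : a < b); simp; omega
  · exact List.pairwise_lt_range (n := _)

lemma Bl_getD (m j : ℕ) : (Bl m).getD j 0 =
    if j = 0 then (m:ℤ)+2 else if j ≤ m then (j:ℤ)+1
    else if j = m+1 then 1 else 0 := by
  rw [List.getD_eq_getElem?_getD, Bl_get]
  split_ifs <;> rfl

lemma Bl_swap (m : ℕ) : swapStep (Bl m) (Cl m) := by
  refine ⟨0, m+1, by rw [Bl_length, Cl_length], ?_, ?_, ?_⟩
  · rw [Bl_get, Cl_get, if_pos (by omega), if_neg (by omega), if_neg (by omega), if_pos rfl]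
    norm_num
  · rw [Bl_get, Cl_get, if_pos (by omega), if_pos rfl]
    push_cast; ring_nf
  · intro k hk0 hk1
    rw [Bl_get, Cl_get, if_neg hk0]
    by_cases h : k ≤ m
    · rw [if_pos h, if_pos (by omega)]
    · rw [if_neg h, if_neg hk1, if_neg (by omega)]

lemma Bl_not_sorted (m : ℕ) : ¬ (Bl m).Pairwise (· ≤ ·) := by
  intro h
  rw [Bl, List.pairwise_cons] at h
  have := h.1 1 (by simp)
  omega

lemma Bl_rank0 (m : ℕ) : rankL (Bl m) 0 = m + 1 := by
  rw [rankL, Bl_length]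
  have : ((Finset.range (m+2)).filter (fun j => (Bl m).getD j 0 < (Bl m).getD 0 0))
      = (Finset.range (m+2)).erase 0 := by
    ext j
    simp only [Finset.mem_filter, Finset.mem_erase, Finset.mem_range, Bl_getD]
    simp only [if_true]
    split_ifs with h1 h2 h3 <;> constructor <;> intro hh <;>
      first | omega | (exfalso; omega) | (refine ⟨?_, ?_⟩ <;> omega) | (obtain ⟨a, b⟩ := hh; omega)
  rw [this, Finset.card_erase_of_mem (by simp), Finset.card_range]
  omega


lemma Bl_rank_le (m i : ℕ) (hi : i < m + 2) : rankL (Bl m) i ≤ m + 1 := by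
  rw [rankL, Bl_length]
  have hsub : ((Finset.range (m+2)).filter (fun j => (Bl m).getD j 0 < (Bl m).getD i 0))
      ⊆ (Finset.range (m+2)).erase i := by
    intro j hj
    simp only [Finset.mem_filter, Finset.mem_range] at hj
    simp only [Finset.mem_erase, Finset.mem_range]
    refine ⟨?_, hj.1⟩
    rintro rfl
    exact lt_irrefl _ hj.2
  calc _ ≤ ((Finset.range (m+2)).erase i).card := Finset.card_le_card hsub
    _ = m + 1 := by rw [Finset.card_erase_of_mem (by simp [hi]), Finset.card_range]; omega

lemma Bl_kmax (m : ℕ) : kmaxL (Bl m) = m + 1 := by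
  rw [kmaxL, Bl_length]
  apply le_antisymm
  · apply Finset.sup_le
    intro i hi
    rw [Finset.mem_range] at hi
    have h1 := Bl_rank_le m i hi
    omega
  · have h0 : (0 : ℕ) ∈ Finset.range (m + 2) := by simp
    have h := Finset.le_sup (f := fun i : ℕ => ((i : ℤ) - (rankL (Bl m) i : ℤ)).natAbs) h0
    simp only [Bl_rank0, Nat.cast_zero, zero_sub, Int.natAbs_neg] at h
    refine le_trans (le_of_eq ?_) h
    omega

lemma Bl_cost (m : ℕ) : sortCost swapStep (Bl m) = 1 := by
  rw [sortCost]
  have h1 : 1 ∈ {k | ∃ l', reachN swapStep k (Bl m) l' ∧ l'.Pairwise (· ≤ ·)} :=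
    ⟨Cl m, ⟨Cl m, Bl_swap m, rfl⟩, Cl_sorted m⟩
  have h0 : 0 ∉ {k | ∃ l', reachN swapStep k (Bl m) l' ∧ l'.Pairwise (· ≤ ·)} := by
    rintro ⟨l', hr, hs⟩
    have : Bl m = l' := hr
    exact Bl_not_sorted m (this ▸ hs)
  have hle := Nat.sInf_le h1
  have hmem := Nat.sInf_mem (⟨1, h1⟩ : Set.Nonempty _)
  have : sInf {k | ∃ l', reachN swapStep k (Bl m) l' ∧ l'.Pairwise (· ≤ ·)} ≠ 0 := by
    intro h; rw [h] at hmem; exact h0 hmem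
  omega

lemma coe_norm (m : ℕ) : (List.map (fun i => (i:ℤ)+2) (List.range m)) = (List.range m).map (fun i : ℕ => (i:ℤ)+2) := by
  induction m with
  | zero => rfl
  | succ k ih => rw [List.range_succ]; simp_all


/-- The array `[n, 2, 3, …, n-1, 1]` can be sorted by a single transposition but has
maximum displacement `n - 1`. -/
theorem kmax_unbounded_by_kswap (n : ℕ) (hn : 2 ≤ n) :
    sortCost swapStep
      ((n : ℤ) :: ((List.range (n - 2)).map (fun i => (i : ℤ) + 2) ++ [(1 : ℤ)])) = 1 ∧
    kmaxL ((n : ℤ) :: ((List.range (n - 2)).map (fun i => (i : ℤ) + 2) ++ [(1 : ℤ)]))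
      = n - 1 := by
  obtain ⟨m, rfl⟩ : ∃ m, n = m + 2 := ⟨n - 2, by omega⟩
  have hB : ((m + 2 : ℕ) : ℤ) :: ((List.range (m + 2 - 2)).map (fun i => (i : ℤ) + 2) ++ [(1 : ℤ)]) = Bl m := by
    rw [show m + 2 - 2 = m from rfl, coe_norm, Bl]
    push_cast
    rfl
  rw [hB, Bl_cost, Bl_kmax]
  exact ⟨rfl, rfl⟩
end
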